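/- The joint CDF value admits the reversed-order representation: V(R) = ∫₀^{rₙ} ∫₀^{min(r_{n-1}, sₙ)} ⋯ ∫₀^{min(r₁, s₂)} ds₁ ds₂ ⋯ ds_n. -/

import Mathlib

open MeasureTheory intervalIntegral

/-- Iterated integral `V a [r₁,…,rₙ] = ∫ s₁ in a..r₁, ∫ s₂ in s₁..r₂, ⋯ ∫ sₙ in s_{n-1}..rₙ, 1`.
The joint CDF value of the paper is `V 0 R`. -/
noncomputable def V : ℝ → List ℝ → ℝ
  | _, [] => 1
  | a, r :: R => ∫ s in a..r, V s R

/-- Reversed iterated integral: `W b [rₙ,…,r₁] = ∫ sₙ in 0..min rₙ b, ∫ s_{n-1} in 0..min r_{n-1} sₙ, ⋯ 1`. -/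
noncomputable def W : ℝ → List ℝ → ℝ
  | _, [] => 1
  | b, r :: R => ∫ s in (0:ℝ)..(min r b), W s R

/-- Generalized reversed iterated integral with lower bound `a`. -/
noncomputable def Wa : ℝ → ℝ → List ℝ → ℝ
  | _, _, [] => 1
  | a, b, r :: R => ∫ s in a..(min r b), Wa a s R

lemma Wa_zero (L : List ℝ) : ∀ b, Wa 0 b L = W b L := by
  induction L with
  | nil => intro b; rfl
  | cons c L ih =>
    intro b
    show (∫ s in (0:ℝ)..(min c b), Wa 0 s L) = ∫ s in (0:ℝ)..(min c b), W s L
    simp only [ih]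

/-- Joint continuity of `Wa` in its two real arguments. -/
lemma contWa (L : List ℝ) : Continuous fun p : ℝ × ℝ => Wa p.1 p.2 L := by
  induction L with
  | nil => exact continuous_const
  | cons c L ih =>
    have hg : Continuous (Function.uncurry fun (p : ℝ × ℝ) (s : ℝ) => Wa p.1 s L) := by
      have : (Function.uncurry fun (p : ℝ × ℝ) (s : ℝ) => Wa p.1 s L)
          = (fun q : ℝ × ℝ => Wa q.1 q.2 L) ∘ (fun q : (ℝ × ℝ) × ℝ => (q.1.1, q.2)) := rfl
      rw [this]
      exact ih.comp (by fun_prop)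
    have h1 : Continuous fun p : ℝ × ℝ => ∫ s in (0:ℝ)..(min c p.2), Wa p.1 s L :=
      continuous_parametric_intervalIntegral_of_continuous hg (by fun_prop)
    have h2 : Continuous fun p : ℝ × ℝ => ∫ s in (0:ℝ)..p.1, Wa p.1 s L :=
      continuous_parametric_intervalIntegral_of_continuous hg continuous_fst
    have key : (fun p : ℝ × ℝ => Wa p.1 p.2 (c :: L))
        = fun p => (∫ s in (0:ℝ)..(min c p.2), Wa p.1 s L) - ∫ s in (0:ℝ)..p.1, Wa p.1 s L := by
      funext p
      have hcont : Continuous fun s : ℝ => Wa p.1 s L := by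
        have : (fun s : ℝ => Wa p.1 s L)
            = (fun q : ℝ × ℝ => Wa q.1 q.2 L) ∘ (fun s => (p.1, s)) := rfl
        rw [this]; exact ih.comp (by fun_prop)
      rw [show Wa p.1 p.2 (c :: L) = ∫ s in p.1..(min c p.2), Wa p.1 s L from rfl,
        ← intervalIntegral.integral_interval_sub_left
          (hcont.intervalIntegrable _ _) (hcont.intervalIntegrable _ _)]
    rw [key]
    exact h1.sub h2

lemma contWa1 (L : List ℝ) (a : ℝ) : Continuous fun s : ℝ => Wa a s L := by
  have : (fun s : ℝ => Wa a s L) = (fun q : ℝ × ℝ => Wa q.1 q.2 L) ∘ (fun s => (a, s)) := rfl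
  rw [this]; exact (contWa L).comp (by fun_prop)

lemma contWa2 (L : List ℝ) (b : ℝ) : Continuous fun s : ℝ => Wa s b L := by
  have : (fun s : ℝ => Wa s b L) = (fun q : ℝ × ℝ => Wa q.1 q.2 L) ∘ (fun s => (s, b)) := rfl
  rw [this]; exact (contWa L).comp (by fun_prop)

/-- Fubini on a triangle for a jointly continuous function. -/
lemma triangle_swap {f : ℝ → ℝ → ℝ} (hf : Continuous fun p : ℝ × ℝ => f p.1 p.2)
    {a p q : ℝ} (hap : a ≤ p) (hpq : p ≤ q) :
    (∫ s in a..p, ∫ t in s..q, f s t) = ∫ t in a..q, ∫ s in a..(min p t), f s t := by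
  have haq : a ≤ q := hap.trans hpq
  set F : ℝ → ℝ → ℝ := fun s t => Set.indicator (Set.Ioi s) (f s) t with hF
  -- bound on the compact square
  obtain ⟨C, hC⟩ : ∃ C, ∀ z ∈ Set.Icc a q ×ˢ Set.Icc a q,
      ‖(fun p : ℝ × ℝ => f p.1 p.2) z‖ ≤ C :=
    (isCompact_Icc.prod isCompact_Icc).exists_bound_of_continuousOn hf.continuousOn
  have hFmeas : AEStronglyMeasurable (Function.uncurry F)
      ((volume.restrict (Set.Ioc a p)).prod (volume.restrict (Set.Ioc a q))) := by
    have : Function.uncurry F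
        = Set.indicator {z : ℝ × ℝ | z.1 < z.2} (fun z => f z.1 z.2) := by
      funext z
      simp only [Function.uncurry, hF, Set.indicator, Set.mem_Ioi, Set.mem_setOf_eq]
    rw [this]
    exact ((hf.stronglyMeasurable.indicator
      (isOpen_lt continuous_fst continuous_snd).measurableSet)).aestronglyMeasurable
  have hFint : Integrable (Function.uncurry F)
      ((volume.restrict (Set.Ioc a p)).prod (volume.restrict (Set.Ioc a q))) := by
    refine Integrable.mono' (integrable_const C) hFmeas ?_
    rw [Measure.prod_restrict]
    refine (ae_restrict_iff' ((measurableSet_Ioc).prod measurableSet_Ioc)).2 ?_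
    filter_upwards with z hz
    have hz1 : z.1 ∈ Set.Icc a q := ⟨hz.1.1.le, hz.1.2.trans hpq⟩
    have hz2 : z.2 ∈ Set.Icc a q := ⟨hz.2.1.le, hz.2.2⟩
    have hb := hC z ⟨hz1, hz2⟩
    simp only [Function.uncurry, hF, Set.indicator]
    split
    · exact hb
    · simp only [norm_zero]
      exact (norm_nonneg _).trans hb
  have step1 : (∫ s in a..p, ∫ t in s..q, f s t)
      = ∫ s in Set.Ioc a p, ∫ t in Set.Ioc a q, F s t := by
    rw [intervalIntegral.integral_of_le hap]
    refine setIntegral_congr_fun measurableSet_Ioc (fun s hs => ?_)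
    rw [intervalIntegral.integral_of_le (hs.2.trans hpq),
      setIntegral_indicator measurableSet_Ioi, Set.Ioc_inter_Ioi,
      sup_of_le_right hs.1.le]
  have step2 : (∫ s in Set.Ioc a p, ∫ t in Set.Ioc a q, F s t)
      = ∫ t in Set.Ioc a q, ∫ s in Set.Ioc a p, F s t :=
    integral_integral_swap hFint
  have step3 : (∫ t in Set.Ioc a q, ∫ s in Set.Ioc a p, F s t)
      = ∫ t in a..q, ∫ s in a..(min p t), f s t := by
    rw [intervalIntegral.integral_of_le haq]
    refine setIntegral_congr_fun measurableSet_Ioc (fun t ht => ?_)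
    have h1 : (∫ s in Set.Ioc a p, F s t) = ∫ s in Set.Ioc a p ∩ Set.Iio t, f s t := by
      have : ∀ s, F s t = Set.indicator (Set.Iio t) (fun s => f s t) s := by
        intro s
        simp only [hF, Set.indicator, Set.mem_Ioi, Set.mem_Iio]
      simp only [this]
      rw [setIntegral_indicator measurableSet_Iio]
    rw [h1]
    have hmin : a ≤ min p t := le_min hap ht.1.le
    rw [intervalIntegral.integral_of_le hmin]
    rcases le_or_gt t p with htp | htp
    · have hseq : Set.Ioc a p ∩ Set.Iio t = Set.Ioo a t := by
        ext x
        simp only [Set.mem_inter_iff, Set.mem_Ioc, Set.mem_Iio, Set.mem_Ioo]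
        constructor
        · rintro ⟨⟨h1, _⟩, h2⟩; exact ⟨h1, h2⟩
        · rintro ⟨h1, h2⟩; exact ⟨⟨h1, (h2.le.trans htp)⟩, h2⟩
      rw [hseq, min_eq_right htp]
      exact setIntegral_congr_set Ioo_ae_eq_Ioc
    · have hseq : Set.Ioc a p ∩ Set.Iio t = Set.Ioc a p := by
        refine Set.inter_eq_left.2 (fun x hx => ?_)
        exact lt_of_le_of_lt hx.2 htp
      rw [hseq, min_eq_left htp.le]
  rw [step1, step2, step3]

/-- Key lemma: peeling off the innermost variable. -/
lemma key (L : List ℝ) : ∀ a b r0, a ≤ r0 → a ≤ b → (∀ x ∈ L, r0 ≤ x) →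
    (∫ s in a..(min r0 b), Wa s b L) = Wa a b (L ++ [r0]) := by
  induction L with
  | nil =>
    intro a b r0 _ _ _
    rfl
  | cons c L ih =>
    intro a b r0 har hab hL
    have hr0c : r0 ≤ c := hL c (by simp)
    have hcut : (∫ s in a..(min r0 b), Wa s b (c :: L))
        = ∫ s in a..(min r0 b), ∫ t in s..(min c b), Wa s t L := rfl
    have hap : a ≤ min r0 b := le_min har hab
    have hpq : min r0 b ≤ min c b := min_le_min hr0c le_rfl
    have hswap := triangle_swap (f := fun s t => Wa s t L) (contWa L) hap hpq
    rw [hcut, hswap]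
    have hfinal : (∫ t in a..(min c b), ∫ s in a..(min (min r0 b) t), Wa s t L)
        = ∫ t in a..(min c b), Wa a t (L ++ [r0]) := by
      refine intervalIntegral.integral_congr (fun t ht => ?_)
      rw [Set.uIcc_of_le (le_min (har.trans hr0c) hab)] at ht
      have hat : a ≤ t := ht.1
      have htb : t ≤ b := ht.2.trans (min_le_right _ _)
      have : min (min r0 b) t = min r0 t := by
        rw [min_right_comm, min_eq_left ((min_le_right r0 t).trans htb)]
      rw [this]
      exact ih a t r0 har hat (fun x hx => hL x (by simp [hx]))
    rw [hfinal]
    rfl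

/-- Main induction: `V` with lower bound `a` equals the reversed `Wa`. -/
lemma V_eq_Wa : ∀ (R : List ℝ) (a b : ℝ), (∀ x ∈ R, a ≤ x) → (∀ x ∈ R, x ≤ b) →
    R.Pairwise (· ≤ ·) → a ≤ b → V a R = Wa a b R.reverse := by
  intro R
  induction R with
  | nil => intro a b _ _ _ _; rfl
  | cons r0 R ih =>
    intro a b hge hle hsort hab
    have har : a ≤ r0 := hge r0 (by simp)
    have hrb : r0 ≤ b := hle r0 (by simp)
    have hsortR : R.Pairwise (· ≤ ·) := hsort.of_cons
    have hr0R : ∀ x ∈ R, r0 ≤ x := fun x hx => (List.pairwise_cons.1 hsort).1 x hx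
    have step1 : V a (r0 :: R) = ∫ s in a..r0, Wa s b R.reverse := by
      show (∫ s in a..r0, V s R) = _
      refine intervalIntegral.integral_congr (fun s hs => ?_)
      rw [Set.uIcc_of_le har] at hs
      exact ih s b (fun x hx => hs.2.trans (hr0R x hx))
        (fun x hx => hle x (by simp [hx])) hsortR (hs.2.trans hrb)
    have step2 : (∫ s in a..r0, Wa s b R.reverse) = Wa a b (R.reverse ++ [r0]) := by
      nth_rewrite 1 [show r0 = min r0 b from (min_eq_left hrb).symm]
      exact key R.reverse a b r0 har hab (fun x hx => hr0R x (List.mem_reverse.1 hx))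
    rw [step1, step2, List.reverse_cons]

theorem stmt_9 (n : ℕ) (r : Fin n → ℝ) (hmono : Monotone r)
    (h0 : ∀ i, 0 ≤ r i) (h1 : ∀ i, r i ≤ 1) :
    V 0 (List.ofFn r) = W 1 (List.ofFn r).reverse := by
  rw [← Wa_zero]
  refine V_eq_Wa (List.ofFn r) 0 1 ?_ ?_ ?_ zero_le_one
  · intro x hx
    obtain ⟨i, rfl⟩ := (List.mem_ofFn).1 hx
    exact h0 i
  · intro x hx
    obtain ⟨i, rfl⟩ := (List.mem_ofFn).1 hx
    exact h1 i
  · exact (List.sortedLE_ofFn_iff.2 hmono).pairwise
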